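/- Let λ ∈ (0,1) and θ ∈ (0,1/2). Then the function f : ℝ → ℝ defined by f(c) = (c/((2θ−1+2cθ)(2−2θ−c(2θ−1))))^((1−θ)/(θ−1/2)) − (2θ−1+2cθ)²/(1−λ) has exactly one zero in the open interval ((1−θ)/θ, ∞); i.e., there exists a unique c ∈ ((1−θ)/θ, ∞) with f(c) = 0. -/

import Mathlib

open Real Set Filter

theorem growth_optimal_f_unique_root_theta_lt_half
    (lam θ : ℝ) (hlam : lam ∈ Set.Ioo (0:ℝ) 1) (hθ : θ ∈ Set.Ioo (0:ℝ) (1/2))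
    (f : ℝ → ℝ)
    (hf : ∀ c : ℝ, f c =
      (c / ((2*θ - 1 + 2*c*θ) * (2 - 2*θ - c*(2*θ - 1)))) ^ ((1 - θ)/(θ - 1/2))
        - (2*θ - 1 + 2*c*θ)^2 / (1 - lam)) :
    ∃! c : ℝ, c ∈ Set.Ioi ((1 - θ)/θ) ∧ f c = 0 := by
  obtain ⟨hθ0, hθ2⟩ := hθ
  obtain ⟨hl0, hl1⟩ := hlam
  have h12 : (0:ℝ) < 1 - 2*θ := by linarith
  have h1θ : (0:ℝ) < 1 - θ := by linarith
  have hlam1 : (0:ℝ) < 1 - lam := by linarith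
  set c₀ : ℝ := (1 - θ)/θ with hc₀
  have hc₀pos : 0 < c₀ := div_pos h1θ hθ0
  have hθc₀ : θ * c₀ = 1 - θ := by rw [hc₀]; field_simp
  set q : ℝ := 2*(1-θ)/(1-2*θ) with hq
  have hqpos : 0 < q := by rw [hq]; positivity
  have hq2 : q - 2 = 2*θ/(1-2*θ) := by rw [hq]; field_simp [h12.ne']; ring
  have hq2pos : 0 < q - 2 := by rw [hq2]; positivity
  have hd1 : θ - 1/2 ≠ 0 := by intro h; linarith
  have hpq : (1 - θ)/(θ - 1/2) = -q := by
    have h2θ : (2*θ-1:ℝ) ≠ 0 := by intro h; linarith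
    rw [hq, ← div_neg, show -(1-2*θ) = 2*θ-1 from by ring, div_eq_div_iff hd1 h2θ]
    ring
  set H : ℝ → ℝ := fun c =>
    (q-2)*Real.log (2*θ-1+2*c*θ) + q*Real.log (2-2*θ-c*(2*θ-1)) - q*Real.log c with hH
  have hAx : ∀ x, c₀ ≤ x → (1:ℝ) ≤ 2*θ-1+2*x*θ := by
    intro x hx
    have h := mul_le_mul_of_nonneg_left hx hθ0.le
    nlinarith
  have hBx : ∀ x, c₀ ≤ x → (0:ℝ) < 2-2*θ-x*(2*θ-1) := by
    intro x hx
    have hx0 : (0:ℝ) < x := lt_of_lt_of_le hc₀pos hx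
    nlinarith [mul_pos h12 hx0]
  -- key equivalence
  have hkey : ∀ x ∈ Ioi c₀, (f x = 0 ↔ H x = -Real.log (1-lam)) := by
    intro x hx
    rw [mem_Ioi] at hx
    have hx' : c₀ ≤ x := hx.le
    have hApos : (0:ℝ) < 2*θ-1+2*x*θ := lt_of_lt_of_le one_pos (hAx x hx')
    have hBp := hBx x hx'
    have hx0 : (0:ℝ) < x := lt_trans hc₀pos hx
    have hgpos : 0 < x / ((2*θ-1+2*x*θ)*(2-2*θ-x*(2*θ-1))) :=
      div_pos hx0 (mul_pos hApos hBp)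
    have hrpos : 0 < (2*θ-1+2*x*θ)^2/(1-lam) := by positivity
    have hlpos : 0 < (x / ((2*θ-1+2*x*θ)*(2-2*θ-x*(2*θ-1)))) ^ ((1-θ)/(θ-1/2)) :=
      Real.rpow_pos_of_pos hgpos _
    rw [hf x, sub_eq_zero]
    have hiff : (x / ((2*θ-1+2*x*θ)*(2-2*θ-x*(2*θ-1)))) ^ ((1-θ)/(θ-1/2))
        = (2*θ-1+2*x*θ)^2/(1-lam)
        ↔ Real.log ((x / ((2*θ-1+2*x*θ)*(2-2*θ-x*(2*θ-1)))) ^ ((1-θ)/(θ-1/2)))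
          = Real.log ((2*θ-1+2*x*θ)^2/(1-lam)) := by
      constructor
      · intro h; rw [h]
      · intro h
        rw [← Real.exp_log hlpos, ← Real.exp_log hrpos, h]
    rw [hiff, Real.log_rpow hgpos, Real.log_div hx0.ne' (mul_pos hApos hBp).ne',
      Real.log_mul hApos.ne' hBp.ne',
      Real.log_div (pow_pos hApos 2).ne' hlam1.ne', Real.log_pow, hpq]
    simp only [hH]
    push_cast
    constructor
    · intro h; linear_combination h
    · intro h; linear_combination h
  -- continuity
  have hcont : ContinuousOn H (Ici c₀) := by
    rw [hH]
    apply ContinuousOn.sub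
    · apply ContinuousOn.add
      · exact continuousOn_const.mul (ContinuousOn.log (by fun_prop)
          (fun x hx => (lt_of_lt_of_le one_pos (hAx x hx)).ne'))
      · exact continuousOn_const.mul (ContinuousOn.log (by fun_prop)
          (fun x hx => (hBx x hx).ne'))
    · exact continuousOn_const.mul (ContinuousOn.log continuousOn_id
        (fun x hx => (lt_of_lt_of_le hc₀pos hx).ne'))
  -- strict monotonicity
  have hmono : StrictMonoOn H (Ici c₀) := by
    apply strictMonoOn_of_deriv_pos (convex_Ici c₀) hcont
    intro x hx
    rw [interior_Ici, mem_Ioi] at hx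
    have hx0 : (0:ℝ) < x := lt_trans hc₀pos hx
    have hApos : (0:ℝ) < 2*θ-1+2*x*θ := lt_of_lt_of_le one_pos (hAx x hx.le)
    have hBp := hBx x hx.le
    have hA' : HasDerivAt (fun c:ℝ => 2*θ-1+2*c*θ) (2*θ) x := by
      have h := (((hasDerivAt_id x).const_mul (2:ℝ)).mul_const θ).const_add (2*θ-1)
      simpa using h
    have hB' : HasDerivAt (fun c:ℝ => 2-2*θ-c*(2*θ-1)) (1-2*θ) x := by
      have h := ((hasDerivAt_id x).mul_const (2*θ-1)).const_sub (2-2*θ)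
      rw [show (1-2*θ:ℝ) = -(1*(2*θ-1)) by ring]
      simpa using h
    have hsum : HasDerivAt (fun c:ℝ =>
        (q-2)*Real.log (2*θ-1+2*c*θ) + q*Real.log (2-2*θ-c*(2*θ-1)) - q*Real.log c)
        ((q-2)*((2*θ)/(2*θ-1+2*x*θ)) + q*((1-2*θ)/(2-2*θ-x*(2*θ-1))) - q*x⁻¹) x :=
      (((hA'.log hApos.ne').const_mul (q-2)).add
        ((hB'.log hBp.ne').const_mul q)).sub ((Real.hasDerivAt_log hx0.ne').const_mul q)
    rw [hH, hsum.deriv]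
    have hQ : 0 < θ*x - (1-θ) := by nlinarith [mul_lt_mul_of_pos_left hx hθ0]
    have hiden : (q-2)*((2*θ)/(2*θ-1+2*x*θ)) + q*((1-2*θ)/(2-2*θ-x*(2*θ-1))) - q*x⁻¹
        = 4*(θ*x-(1-θ))^2 / ((2*θ-1+2*x*θ)*(2-2*θ-x*(2*θ-1))*x) := by
      rw [hq]
      field_simp [show (2*θ-1+2*θ*x:ℝ) ≠ 0 by linarith, show (2*(1-θ)-(2*θ-1)*x:ℝ) ≠ 0 by linarith, hApos.ne', hBp.ne', hx0.ne', h12.ne']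
      ring
    rw [hiden]
    have hsq := pow_pos hQ 2
    exact div_pos (by linarith) (by positivity)
  -- H c₀ = 0
  have hAc : 2*θ-1+2*c₀*θ = 1 := by rw [hc₀]; field_simp; ring
  have hBc : 2-2*θ-c₀*(2*θ-1) = c₀ := by rw [hc₀]; field_simp; ring
  have hH0 : H c₀ = 0 := by
    simp only [hH]
    rw [hAc, hBc]
    simp
  have hL : 0 < -Real.log (1-lam) := by
    have := Real.log_neg hlam1 (by linarith : 1 - lam < 1)
    linarith
  -- H tends to infinity
  have htop : Tendsto H atTop atTop := by
    have hAtop : Tendsto (fun c:ℝ => 2*θ-1+2*c*θ) atTop atTop := by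
      apply tendsto_atTop_add_const_left
      exact (tendsto_id.const_mul_atTop two_pos).atTop_mul_const hθ0
    have h1 : Tendsto (fun c:ℝ => (q-2)*Real.log (2*θ-1+2*c*θ)) atTop atTop :=
      (Real.tendsto_log_atTop.comp hAtop).const_mul_atTop hq2pos
    have h2 : Tendsto (fun c:ℝ => q*Real.log (2-2*θ-c*(2*θ-1)) - q*Real.log c)
        atTop (nhds (q*Real.log (1-2*θ))) := by
      have hb : Tendsto (fun c:ℝ => (2-2*θ)/c + (1-2*θ)) atTop (nhds (0 + (1-2*θ))) :=
        (tendsto_const_nhds.div_atTop tendsto_id).add tendsto_const_nhds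
      rw [zero_add] at hb
      have hb2 : Tendsto (fun c:ℝ => Real.log ((2-2*θ)/c + (1-2*θ)))
          atTop (nhds (Real.log (1-2*θ))) :=
        (Real.continuousAt_log h12.ne').tendsto.comp hb
      have hb3 := hb2.const_mul q
      apply hb3.congr'
      filter_upwards [eventually_ge_atTop (max c₀ 1)] with c hc
      have hc0' : c₀ ≤ c := le_trans (le_max_left _ _) hc
      have hc0 : (0:ℝ) < c := lt_of_lt_of_le hc₀pos hc0'
      have hBc2 := hBx c hc0'
      have heq : (2-2*θ)/c + (1-2*θ) = (2-2*θ-c*(2*θ-1))/c := by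
        field_simp
        ring
      rw [heq, Real.log_div hBc2.ne' hc0.ne']
      ring
    have hsum := h1.atTop_add h2
    rw [hH]
    exact hsum.congr (fun c => by ring)
  obtain ⟨c₁, hHc₁, hc₀c₁⟩ :=
    ((htop.eventually_gt_atTop (-Real.log (1-lam))).and (eventually_gt_atTop c₀)).exists
  have hIcc : ContinuousOn H (Icc c₀ c₁) := hcont.mono Icc_subset_Ici_self
  have hmem : -Real.log (1-lam) ∈ Ioo (H c₀) (H c₁) := by
    rw [hH0]; exact ⟨hL, hHc₁⟩
  obtain ⟨c, hcIoo, hHc⟩ := intermediate_value_Ioo hc₀c₁.le hIcc hmem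
  refine ⟨c, ⟨hcIoo.1, (hkey c hcIoo.1).mpr hHc⟩, ?_⟩
  rintro y ⟨hy, hfy⟩
  have hHy : H y = -Real.log (1-lam) := (hkey y hy).mp hfy
  exact hmono.injOn (mem_Ici.mpr (le_of_lt hy)) (mem_Ici.mpr (le_of_lt hcIoo.1))
    (by rw [hHy, hHc])
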